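/- Suppose in addition that p and q are twin primes with q = p + 2. Then for the second Ding–Helleseth sequence, gcd(S(2), 2^N − 1) = 1. -/

import Mathlib

open Finset

/-- `ξ_N = exp(2πi/N)`, a primitive `N`-th root of unity. -/
noncomputable def DHxi (N : ℕ) : ℂ := Complex.exp (2 * Real.pi * Complex.I / N)

/-- Gauss period: `Σ_{a ∈ D} ξ_N^a`. -/
noncomputable def DHeta (N : ℕ) (D : Finset (ZMod N)) : ℂ := ∑ a ∈ D, DHxi N ^ a.val

/-- Ding–Helleseth generalized cyclotomic class
`D₀ = {g^(2t) x^i : 0 ≤ t ≤ e/2 - 1, i ∈ {0,1}}` in `ZMod (p*q)`, where `e = (p-1)(q-1)/2`. -/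
def DHD0 (p q g x : ℕ) : Finset (ZMod (p * q)) :=
  (Finset.range ((p - 1) * (q - 1) / 4) ×ˢ Finset.range 2).image
    (fun ti => (g : ZMod (p * q)) ^ (2 * ti.1) * (x : ZMod (p * q)) ^ ti.2)

/-- `D₁ = g · D₀`. -/
def DHD1 (p q g x : ℕ) : Finset (ZMod (p * q)) :=
  (DHD0 p q g x).image (fun d => (g : ZMod (p * q)) * d)

/-- `P = {p, 2p, …, (q-1)p}` as a subset of `ZMod (p*q)`. -/
def DHP (p q : ℕ) : Finset (ZMod (p * q)) :=
  (Finset.Icc 1 (q - 1)).image (fun k => ((k * p : ℕ) : ZMod (p * q)))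

/-- `Q = {q, 2q, …, (p-1)q}` as a subset of `ZMod (p*q)`. -/
def DHQ (p q : ℕ) : Finset (ZMod (p * q)) :=
  (Finset.Icc 1 (p - 1)).image (fun k => ((k * q : ℕ) : ZMod (p * q)))

/-- First Ding–Helleseth sequence: `s_i = 1` iff `i mod N ∈ D₁ ∪ P`. -/
def DHs1 (p q g x : ℕ) (i : ℕ) : ℕ :=
  if (i : ZMod (p * q)) ∈ DHD1 p q g x ∪ DHP p q then 1 else 0

/-- Second Ding–Helleseth sequence: `s_i = 1` iff `i mod N ∈ D₁ ∪ Q`. -/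
def DHs2 (p q g x : ℕ) (i : ℕ) : ℕ :=
  if (i : ZMod (p * q)) ∈ DHD1 p q g x ∪ DHQ p q then 1 else 0

/-- Circulant matrix of the first sequence: `a_{i,j} = s_{(i-j) mod N}`. -/
noncomputable def DHA1 (p q g x : ℕ) : Matrix (Fin (p * q)) (Fin (p * q)) ℂ :=
  fun i j => (DHs1 p q g x ((((i : ℕ) : ZMod (p * q)) - ((j : ℕ) : ZMod (p * q))).val) : ℂ)

/-- Circulant matrix of the second sequence: `a_{i,j} = s_{(i-j) mod N}`. -/
noncomputable def DHA2 (p q g x : ℕ) : Matrix (Fin (p * q)) (Fin (p * q)) ℂ :=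
  fun i j => (DHs2 p q g x ((((i : ℕ) : ZMod (p * q)) - ((j : ℕ) : ZMod (p * q))).val) : ℂ)

/-- `S(z) = Σ_{i=0}^{N-1} s_i z^i` for the first sequence. -/
noncomputable def DHSval1 (p q g x : ℕ) (z : ℂ) : ℂ :=
  ∑ i ∈ Finset.range (p * q), (DHs1 p q g x i : ℂ) * z ^ i

/-- `S(z) = Σ_{i=0}^{N-1} s_i z^i` for the second sequence. -/
noncomputable def DHSval2 (p q g x : ℕ) (z : ℂ) : ℂ :=
  ∑ i ∈ Finset.range (p * q), (DHs2 p q g x i : ℂ) * z ^ i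

/-- `S(2) = Σ_{i=0}^{N-1} s_i 2^i` for the first sequence, as a natural number. -/
def DHS2num1 (p q g x : ℕ) : ℕ := ∑ i ∈ Finset.range (p * q), DHs1 p q g x i * 2 ^ i

/-- `S(2) = Σ_{i=0}^{N-1} s_i 2^i` for the second sequence, as a natural number. -/
def DHS2num2 (p q g x : ℕ) : ℕ := ∑ i ∈ Finset.range (p * q), DHs2 p q g x i * 2 ^ i

/-- Nonzero quadratic residues modulo `q`. -/
def DHQR (q : ℕ) [NeZero q] : Finset (ZMod q) :=
  Finset.univ.filter (fun a => a ≠ 0 ∧ ∃ b : ZMod q, b * b = a)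

/-- Quadratic nonresidues modulo `q`. -/
def DHQNR (q : ℕ) [NeZero q] : Finset (ZMod q) :=
  Finset.univ.filter (fun a => a ≠ 0 ∧ ¬∃ b : ZMod q, b * b = a)



section Helpers

variable {p : ℕ} [Fact p.Prime]

lemma DHgen_ne_zero {g : ℕ} (hgp : orderOf (g : ZMod p) = p - 1) : (g : ZMod p) ≠ 0 := by
  have hp : p.Prime := Fact.out
  intro h
  rw [h] at hgp
  have h2 : ¬ IsOfFinOrder (0 : ZMod p) := by
    rw [isOfFinOrder_iff_pow_eq_one]
    rintro ⟨n, hn, hone⟩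
    rw [zero_pow hn.ne'] at hone
    exact zero_ne_one hone
  rw [orderOf_eq_zero_iff.mpr h2] at hgp
  have := hp.two_le
  omega

lemma DHgen_pow {g : ℕ} (hgp : orderOf (g : ZMod p) = p - 1)
    {a : ZMod p} (ha : a ≠ 0) : ∃ k : ℕ, (g : ZMod p) ^ k = a := by
  have hg0 := DHgen_ne_zero hgp
  set gu : (ZMod p)ˣ := Units.mk0 _ hg0 with hgu
  have hord : orderOf gu = Fintype.card (ZMod p)ˣ := by
    rw [ZMod.card_units, ← hgp, ← orderOf_units]
    rfl
  have htop : Subgroup.zpowers gu = ⊤ := by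
    apply Subgroup.eq_top_of_card_eq
    rw [Nat.card_eq_fintype_card, Nat.card_eq_fintype_card, Fintype.card_zpowers, hord]
  have hmem : Units.mk0 a ha ∈ Subgroup.zpowers gu := htop ▸ Subgroup.mem_top _
  rw [← mem_powers_iff_mem_zpowers] at hmem
  obtain ⟨k, hk⟩ := hmem
  refine ⟨k, ?_⟩
  have := congrArg Units.val hk
  rwa [Units.val_pow_eq_pow_val] at this

lemma DHgen_not_isSquare {g : ℕ} (hp2 : p ≠ 2) (hgp : orderOf (g : ZMod p) = p - 1) :
    ¬ IsSquare (g : ZMod p) := by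
  have hp : p.Prime := Fact.out
  rintro ⟨c, hc⟩
  have hc0 : c ≠ 0 := by rintro rfl; exact DHgen_ne_zero hgp (by simpa using hc)
  have hpow : (g : ZMod p) ^ ((p - 1) / 2) = 1 := by
    have h2 : 2 * ((p-1)/2) = p - 1 := by
      have := hp.two_le
      have : 2 ∣ p - 1 := by
        have := hp.eq_one_or_self_of_dvd
        rcases Nat.Prime.eq_two_or_odd' hp with h | h
        · exact absurd h hp2
        · obtain ⟨m, hm⟩ := h; omega
      omega
    rw [hc, ← pow_two, ← pow_mul, mul_comm 2, ← mul_comm 2 ((p-1)/2), h2]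
    exact ZMod.pow_card_sub_one_eq_one hc0
  have hdvd := orderOf_dvd_of_pow_eq_one hpow
  rw [hgp] at hdvd
  have h3 := hp.two_le
  have hple : p - 1 ≤ (p-1)/2 := Nat.le_of_dvd (by omega) hdvd
  omega

end Helpers

section CRT

variable {p q : ℕ} [NeZero p] [NeZero q]

lemma DHcrt_fst (h : Nat.Coprime p q) (u : ZMod (p*q)) :
    (ZMod.chineseRemainder h u).1 = ZMod.castHom (dvd_mul_right p q) (ZMod p) u := by
  have : NeZero (p*q) := ⟨Nat.mul_ne_zero (NeZero.ne p) (NeZero.ne q)⟩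
  have h1 : (ZMod.chineseRemainder h u) = ZMod.castHom
      (show Nat.lcm p q ∣ p * q by simp [Nat.lcm_dvd_iff]) (ZMod p × ZMod q) u := rfl
  rw [h1, ZMod.castHom_apply, ZMod.castHom_apply, ZMod.cast_eq_val, ZMod.cast_eq_val]
  exact Prod.fst_natCast _

lemma DHcrt_snd (h : Nat.Coprime p q) (u : ZMod (p*q)) :
    (ZMod.chineseRemainder h u).2 = ZMod.castHom (dvd_mul_left q p) (ZMod q) u := by
  have : NeZero (p*q) := ⟨Nat.mul_ne_zero (NeZero.ne p) (NeZero.ne q)⟩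
  have h1 : (ZMod.chineseRemainder h u) = ZMod.castHom
      (show Nat.lcm p q ∣ p * q by simp [Nat.lcm_dvd_iff]) (ZMod p × ZMod q) u := rfl
  rw [h1, ZMod.castHom_apply, ZMod.castHom_apply, ZMod.cast_eq_val, ZMod.cast_eq_val]
  exact Prod.snd_natCast _

lemma DHinj (h : Nat.Coprime p q) {u v : ZMod (p*q)}
    (h1 : ZMod.castHom (dvd_mul_right p q) (ZMod p) u
        = ZMod.castHom (dvd_mul_right p q) (ZMod p) v)
    (h2 : ZMod.castHom (dvd_mul_left q p) (ZMod q) u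
        = ZMod.castHom (dvd_mul_left q p) (ZMod q) v) : u = v := by
  apply (ZMod.chineseRemainder h).injective
  have e1 := (DHcrt_fst h u).trans (h1.trans (DHcrt_fst h v).symm)
  have e2 := (DHcrt_snd h u).trans (h2.trans (DHcrt_snd h v).symm)
  exact Prod.ext e1 e2

lemma DHsymm_fst (h : Nat.Coprime p q) (a : ZMod p) (b : ZMod q) :
    ZMod.castHom (dvd_mul_right p q) (ZMod p) ((ZMod.chineseRemainder h).symm (a, b)) = a := by
  rw [← DHcrt_fst h, RingEquiv.apply_symm_apply]

lemma DHsymm_snd (h : Nat.Coprime p q) (a : ZMod p) (b : ZMod q) :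
    ZMod.castHom (dvd_mul_left q p) (ZMod q) ((ZMod.chineseRemainder h).symm (a, b)) = b := by
  rw [← DHcrt_snd h, RingEquiv.apply_symm_apply]

end CRT

section Mem

lemma DHpow_modEq {M : Type*} [Monoid M] (a : M) {n m : ℕ} (h : n ≡ m [MOD orderOf a]) :
    a ^ n = a ^ m := by
  rw [← pow_mod_orderOf, (show n % orderOf a = m % orderOf a from h), pow_mod_orderOf]

lemma DHmem_QR {q : ℕ} [NeZero q] {a : ZMod q} :
    a ∈ DHQR q ↔ a ≠ 0 ∧ ∃ b : ZMod q, b * b = a := by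
  simp [DHQR]

lemma DHmem_QNR {q : ℕ} [NeZero q] {a : ZMod q} :
    a ∈ DHQNR q ↔ a ≠ 0 ∧ ¬∃ b : ZMod q, b * b = a := by
  simp [DHQNR]

variable {p q g x : ℕ} [NeZero p] [NeZero q]

lemma DHmemD0_iff (hp : p.Prime) (hq : q.Prime) (hpo : Odd p) (hqo : Odd q)
    (hpq : p < q) (hgcd : Nat.gcd (p-1) (q-1) = 2)
    (hgp : orderOf (g : ZMod p) = p-1) (hgq : orderOf (g : ZMod q) = q-1)
    (hxp : (x : ZMod p) = (g : ZMod p)) (hxq : (x : ZMod q) = 1) (u : ZMod (p*q)) :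
    u ∈ DHD0 p q g x ↔
      (ZMod.castHom (dvd_mul_right p q) (ZMod p) u ≠ 0 ∧
       ZMod.castHom (dvd_mul_left q p) (ZMod q) u ∈ DHQR q) := by
  haveI : Fact p.Prime := ⟨hp⟩
  haveI : Fact q.Prime := ⟨hq⟩
  haveI : NeZero p := ⟨hp.pos.ne'⟩
  haveI : NeZero q := ⟨hq.pos.ne'⟩
  have hp2 : p ≠ 2 := by rintro rfl; exact (Nat.not_odd_iff_even.mpr even_two) hpo
  have hq2 : q ≠ 2 := by rintro rfl; exact (Nat.not_odd_iff_even.mpr even_two) hqo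
  have hp3 : 3 ≤ p := by have := hp.two_le; omega
  have hq3 : 3 ≤ q := by have := hq.two_le; omega
  obtain ⟨p', hp'⟩ : ∃ p', p - 1 = 2 * p' := by
    obtain ⟨m, hm⟩ := hpo; exact ⟨m, by omega⟩
  obtain ⟨q', hq'⟩ : ∃ q', q - 1 = 2 * q' := by
    obtain ⟨m, hm⟩ := hqo; exact ⟨m, by omega⟩
  have hp'1 : 1 ≤ p' := by omega
  have hq'1 : 1 ≤ q' := by omega
  have hrange : (p - 1) * (q - 1) / 4 = p' * q' := by
    rw [hp', hq', show 2*p'*(2*q') = 4*(p'*q') by ring]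
    exact Nat.mul_div_cancel_left _ (by norm_num)
  have hgp0 : (g : ZMod p) ≠ 0 := DHgen_ne_zero hgp
  have hgq0 : (g : ZMod q) ≠ 0 := DHgen_ne_zero hgq
  have hco : Nat.Coprime p q := (Nat.coprime_primes hp hq).mpr (Nat.ne_of_lt hpq)
  set φp := ZMod.castHom (dvd_mul_right p q) (ZMod p) with hφp
  set φq := ZMod.castHom (dvd_mul_left q p) (ZMod q) with hφq
  constructor
  · intro hu
    rw [DHD0, Finset.mem_image] at hu
    obtain ⟨⟨t, i⟩, hti, rfl⟩ := hu
    constructor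
    · rw [map_mul, map_pow, map_pow, map_natCast, map_natCast, hxp]
      exact mul_ne_zero (pow_ne_zero _ hgp0) (pow_ne_zero _ hgp0)
    · rw [map_mul, map_pow, map_pow, map_natCast, map_natCast, hxq, one_pow, mul_one]
      rw [DHmem_QR]
      refine ⟨pow_ne_zero _ hgq0, ⟨(g : ZMod q) ^ t, ?_⟩⟩
      rw [← pow_add, two_mul]
  · rintro ⟨ha, hb⟩
    rw [DHmem_QR] at hb
    obtain ⟨hb0, c, hc⟩ := hb
    have hc0 : c ≠ 0 := by rintro rfl; rw [mul_zero] at hc; exact hb0 hc.symm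
    obtain ⟨k, hk⟩ := DHgen_pow hgp ha
    obtain ⟨m, hm⟩ := DHgen_pow hgq hc0
    -- b = g^(2m)
    have hb2m : (g : ZMod q) ^ (2 * m) = φq u := by
      rw [two_mul, pow_add, hm, hc]
    set i := k % 2 with hi
    have hik : i ≤ k := by omega
    have heven : k - i ≡ 2 * m [MOD Nat.gcd (p-1) (q-1)] := by
      rw [hgcd]
      have h1 : (k - i) % 2 = 0 := by omega
      have h2 : (2 * m) % 2 = 0 := by omega
      unfold Nat.ModEq; omega
    obtain ⟨k'', hk''1, hk''2⟩ := Nat.chineseRemainder' heven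
    have hk''even : k'' % 2 = 0 := by
      have h1 : k'' ≡ k - i [MOD 2] := hk''1.of_dvd ⟨p', hp'⟩
      have h2 : k'' % 2 = (k - i) % 2 := h1
      omega
    set t := (k'' / 2) % (p' * q') with ht
    have htlt : t < p' * q' := Nat.mod_lt _ (by positivity)
    have h2t : 2 * t ≡ k'' [MOD 2 * (p' * q')] := by
      have h1 : k'' / 2 % (p' * q') ≡ k'' / 2 [MOD p' * q'] := Nat.mod_modEq _ _
      have h2 := h1.mul_left' (c := 2)
      calc 2 * t ≡ 2 * (k'' / 2) [MOD 2 * (p' * q')] := h2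
        _ = k'' := by have h3 := Nat.div_add_mod k'' 2; omega
    have h2tp : 2 * t ≡ k - i [MOD p - 1] := by
      have hd : (p - 1) ∣ 2 * (p' * q') := ⟨q', by rw [hp']; ring⟩
      exact (h2t.of_dvd hd).trans hk''1
    have h2tq : 2 * t ≡ 2 * m [MOD q - 1] := by
      have hd : (q - 1) ∣ 2 * (p' * q') := ⟨p', by rw [hq']; ring⟩
      exact (h2t.of_dvd hd).trans hk''2
    have hw : u = (g : ZMod (p*q)) ^ (2 * t) * (x : ZMod (p*q)) ^ i := by
      apply DHinj hco
      · rw [map_mul, map_pow, map_pow, map_natCast, map_natCast, hxp, ← pow_add, ← hk]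
        apply DHpow_modEq
        rw [hgp]
        exact (calc (2 * t + i) ≡ (k - i) + i [MOD p - 1] := h2tp.add_right i
          _ = k := by omega).symm
      · rw [map_mul, map_pow, map_pow, map_natCast, map_natCast, hxq, one_pow, mul_one, ← hb2m]
        apply DHpow_modEq
        rw [hgq]
        exact h2tq.symm
    rw [DHD0, Finset.mem_image]
    refine ⟨(t, i), ?_, hw.symm⟩
    rw [Finset.mem_product, hrange]
    exact ⟨Finset.mem_range.mpr htlt, Finset.mem_range.mpr (by omega)⟩

end Mem

section Mem2

variable {p q g x : ℕ} [NeZero p] [NeZero q]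

lemma DHmemD1_iff (hp : p.Prime) (hq : q.Prime) (hpo : Odd p) (hqo : Odd q)
    (hpq : p < q) (hgcd : Nat.gcd (p-1) (q-1) = 2)
    (hgp : orderOf (g : ZMod p) = p-1) (hgq : orderOf (g : ZMod q) = q-1)
    (hxp : (x : ZMod p) = (g : ZMod p)) (hxq : (x : ZMod q) = 1) (u : ZMod (p*q)) :
    u ∈ DHD1 p q g x ↔
      (ZMod.castHom (dvd_mul_right p q) (ZMod p) u ≠ 0 ∧
       ZMod.castHom (dvd_mul_left q p) (ZMod q) u ∈ DHQNR q) := by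
  haveI : Fact p.Prime := ⟨hp⟩
  haveI : Fact q.Prime := ⟨hq⟩
  have hq2 : q ≠ 2 := by rintro rfl; exact (Nat.not_odd_iff_even.mpr even_two) hqo
  have hgp0 : (g : ZMod p) ≠ 0 := DHgen_ne_zero hgp
  have hgq0 : (g : ZMod q) ≠ 0 := DHgen_ne_zero hgq
  have hco : Nat.Coprime p q := (Nat.coprime_primes hp hq).mpr (Nat.ne_of_lt hpq)
  constructor
  · intro hu
    rw [DHD1, Finset.mem_image] at hu
    obtain ⟨d, hd, rfl⟩ := hu
    rw [DHmemD0_iff hp hq hpo hqo hpq hgcd hgp hgq hxp hxq] at hd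
    obtain ⟨hd1, hd2⟩ := hd
    rw [DHmem_QR] at hd2
    obtain ⟨hb0, c, hc⟩ := hd2
    have hc0 : c ≠ 0 := by rintro rfl; rw [mul_zero] at hc; exact hb0 hc.symm
    refine ⟨?_, ?_⟩
    · rw [map_mul, map_natCast]
      exact mul_ne_zero hgp0 hd1
    · rw [map_mul, map_natCast, DHmem_QNR]
      refine ⟨mul_ne_zero hgq0 hb0, ?_⟩
      rintro ⟨f, hf⟩
      apply DHgen_not_isSquare hq2 hgq
      refine ⟨f * c⁻¹, ?_⟩
      have hcc : c * c ≠ 0 := mul_ne_zero hc0 hc0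
      calc (g : ZMod q) = ((g:ZMod q) * (c * c)) * (c*c)⁻¹ := by
            rw [mul_assoc, mul_inv_cancel₀ hcc, mul_one]
        _ = (f * f) * (c*c)⁻¹ := by
            rw [hc, hf]
        _ = (f * c⁻¹) * (f * c⁻¹) := by
            rw [mul_inv]; ring
  · rintro ⟨ha, hb⟩
    rw [DHmem_QNR] at hb
    obtain ⟨hb0, hbns⟩ := hb
    obtain ⟨k, hk⟩ := DHgen_pow hgq hb0
    have hkodd : k % 2 = 1 := by
      rcases Nat.mod_two_eq_zero_or_one k with h | h
      · exfalso
        apply hbns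
        refine ⟨(g:ZMod q)^(k/2), ?_⟩
        rw [← pow_add, ← hk]
        congr 1
        omega
      · exact h
    set w := (ZMod.chineseRemainder hco).symm
      (((g:ZMod p))⁻¹ * ZMod.castHom (dvd_mul_right p q) (ZMod p) u,
       ((g:ZMod q))⁻¹ * ZMod.castHom (dvd_mul_left q p) (ZMod q) u) with hwdef
    have hw : w ∈ DHD0 p q g x := by
      rw [DHmemD0_iff hp hq hpo hqo hpq hgcd hgp hgq hxp hxq]
      constructor
      · rw [hwdef, DHsymm_fst]
        exact mul_ne_zero (inv_ne_zero hgp0) ha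
      · rw [hwdef, DHsymm_snd, DHmem_QR]
        refine ⟨mul_ne_zero (inv_ne_zero hgq0) hb0, ⟨(g:ZMod q)^((k-1)/2), ?_⟩⟩
        rw [← pow_add, ← hk]
        have h1 : (k-1)/2 + (k-1)/2 = k - 1 := by omega
        rw [h1]
        have h2 : (g:ZMod q)^k = (g:ZMod q) * (g:ZMod q)^(k-1) := by
          rw [← pow_succ']
          congr 1
          omega
        rw [h2, inv_mul_cancel_left₀ hgq0]
    rw [DHD1, Finset.mem_image]
    refine ⟨w, hw, ?_⟩
    apply DHinj hco
    · rw [map_mul, map_natCast, hwdef, DHsymm_fst, mul_inv_cancel_left₀ hgp0]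
    · rw [map_mul, map_natCast, hwdef, DHsymm_snd, mul_inv_cancel_left₀ hgq0]

end Mem2

section Key

lemma DHsum_pow_val {n : ℕ} [NeZero n] {R : Type*} [Field R] {ζ : R}
    (hζn : ζ ^ n = 1) (hζ1 : ζ ≠ 1) : ∑ a : ZMod n, ζ ^ a.val = 0 := by
  have h1 : ∑ a : ZMod n, ζ ^ a.val = ∑ i ∈ Finset.range n, ζ ^ i := by
    apply Finset.sum_nbij' (i := fun a : ZMod n => a.val) (j := fun i : ℕ => (i : ZMod n))
    · intro a _
      exact Finset.mem_range.mpr (ZMod.val_lt a)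
    · intro i _
      exact Finset.mem_univ _
    · intro a _
      exact ZMod.natCast_zmod_val a
    · intro i hi
      exact ZMod.val_natCast_of_lt (Finset.mem_range.mp hi)
    · intro a _
      rfl
  rw [h1]
  have h2 := geom_sum_mul ζ n
  rw [hζn, sub_self] at h2
  rcases mul_eq_zero.mp h2 with h | h
  · exact h
  · exact absurd (sub_eq_zero.mp h) hζ1

lemma DHord {r n : ℕ} [Fact r.Prime] (hr2 : r ≠ 2) (hn : n.Prime) (hn2 : n ≠ 2)
    {ζ : ZMod r} (hζn : ζ ^ n = 1) (hζ1 : ζ ≠ 1) : 2 * n + 1 ≤ r := by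
  have hr : r.Prime := Fact.out
  have hζ0 : ζ ≠ 0 := by
    rintro rfl
    rw [zero_pow hn.pos.ne'] at hζn
    exact zero_ne_one hζn
  have hord : orderOf ζ = n := by
    have hdvd := orderOf_dvd_of_pow_eq_one hζn
    rcases (Nat.dvd_prime hn).mp hdvd with h1 | h1
    · exact absurd (orderOf_eq_one_iff.mp h1) hζ1
    · exact h1
  have h1 : ζ ^ (r - 1) = 1 := ZMod.pow_card_sub_one_eq_one hζ0
  have h2 : n ∣ r - 1 := hord ▸ orderOf_dvd_of_pow_eq_one h1
  have h3 : 2 ∣ r - 1 := by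
    have := hr.two_le
    rcases hr.eq_two_or_odd' with h | h
    · exact absurd h hr2
    · obtain ⟨m, hm⟩ := h; omega
  have hcop : Nat.Coprime 2 n := by
    rcases hn.eq_two_or_odd' with h | h
    · exact absurd h hn2
    · exact (Nat.coprime_two_left).mpr h
  have h4 : 2 * n ∣ r - 1 := hcop.mul_dvd_of_dvd_of_dvd h3 h2
  have h5 : r - 1 ≠ 0 := by have := hr.two_le; omega
  have h6 : 2 * n ≤ r - 1 := Nat.le_of_dvd (Nat.pos_of_ne_zero h5) h4
  omega

lemma DHnotdvd {r m : ℕ} [NeZero r] (hm0 : m ≠ 0) (hmr : m < r) (hcast : (m : ZMod r) = 0) :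
    False := by
  rw [ZMod.natCast_eq_zero_iff] at hcast
  have := Nat.le_of_dvd (Nat.pos_of_ne_zero hm0) hcast
  omega

end Key

section Master

open Finset

lemma DHkey {p q g x : ℕ} (hp : p.Prime) (hq : q.Prime) (hpo : Odd p) (hqo : Odd q)
    (hpq : p < q) (hgcd : Nat.gcd (p-1) (q-1) = 2)
    (hgp : orderOf (g : ZMod p) = p-1) (hgq : orderOf (g : ZMod q) = q-1)
    (hxp : (x : ZMod p) = (g : ZMod p)) (hxq : (x : ZMod q) = 1) (htwin : q = p + 2)
    (r : ℕ) (hr : r.Prime) (hr2 : r ≠ 2)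
    (hβ1 : (2 : ZMod r) ^ (p * q) = 1)
    (hS0 : ((DHS2num2 p q g x : ℕ) : ZMod r) = 0) : False := by
  haveI : Fact p.Prime := ⟨hp⟩
  haveI : Fact q.Prime := ⟨hq⟩
  haveI : Fact r.Prime := ⟨hr⟩
  haveI : NeZero p := ⟨hp.pos.ne'⟩
  haveI : NeZero q := ⟨hq.pos.ne'⟩
  haveI : NeZero (p * q) := ⟨Nat.mul_ne_zero hp.pos.ne' hq.pos.ne'⟩
  haveI : Fact (1 < p * q) := ⟨one_lt_mul_of_lt_of_le hp.one_lt (by omega)⟩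
  have hp2 : p ≠ 2 := by rintro rfl; exact (Nat.not_odd_iff_even.mpr even_two) hpo
  have hq2 : q ≠ 2 := by rintro rfl; exact (Nat.not_odd_iff_even.mpr even_two) hqo
  have hp3 : 3 ≤ p := by have := hp.two_le; omega
  have hq5 : 5 ≤ q := by omega
  have hgp0 : (g : ZMod p) ≠ 0 := DHgen_ne_zero hgp
  have hgq0 : (g : ZMod q) ≠ 0 := DHgen_ne_zero hgq
  have hco : Nat.Coprime p q := (Nat.coprime_primes hp hq).mpr (Nat.ne_of_lt hpq)
  set ρ := ZMod.chineseRemainder hco with hρ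
  set ψ := AddChar.zmodChar (p * q) hβ1 with hψ
  have hψap : ∀ u : ZMod (p*q), ψ u = (2 : ZMod r) ^ u.val := fun u => rfl
  set ε1 := ρ.symm (1, 0) with hε1
  set ε2 := ρ.symm (0, 1) with hε2
  set γ := ψ ε1 with hγ
  set δ := ψ ε2 with hδ
  -- the evaluation of ψ on ρ.symm pairs
  have hFsymm : ∀ (a : ZMod p) (b : ZMod q),
      ψ (ρ.symm (a, b)) = γ ^ a.val * δ ^ b.val := by
    intro a b
    have hsum : ρ.symm (a, b) = (a.val : ZMod (p*q)) * ε1 + (b.val : ZMod (p*q)) * ε2 := by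
      apply ρ.injective
      rw [RingEquiv.apply_symm_apply, map_add, map_mul, map_mul, map_natCast, map_natCast,
        hε1, hε2, RingEquiv.apply_symm_apply, RingEquiv.apply_symm_apply]
      apply Prod.ext
      · simp [Prod.fst_natCast, ZMod.natCast_zmod_val]
      · simp [Prod.snd_natCast, ZMod.natCast_zmod_val]
    rw [hsum, AddChar.map_add_eq_mul, ← nsmul_eq_mul, ← nsmul_eq_mul,
      AddChar.map_nsmul_eq_pow, AddChar.map_nsmul_eq_pow]
  have hFnat : ∀ m : ℕ,
      ψ ((m : ZMod (p*q))) = γ ^ ((m : ZMod p)).val * δ ^ ((m : ZMod q)).val := by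
    intro m
    have h1 : (m : ZMod (p*q)) = ρ.symm ((m : ZMod p), (m : ZMod q)) := by
      apply ρ.injective
      rw [RingEquiv.apply_symm_apply, map_natCast]
      apply Prod.ext
      · simp [Prod.fst_natCast]
      · simp [Prod.snd_natCast]
    rw [h1, hFsymm]
  have hγp : γ ^ p = 1 := by
    rw [hγ, ← AddChar.map_nsmul_eq_pow]
    have h1 : p • ε1 = 0 := by
      rw [nsmul_eq_mul]
      apply ρ.injective
      rw [map_mul, map_natCast, map_zero, hε1, RingEquiv.apply_symm_apply]
      apply Prod.ext
      · simp [Prod.fst_natCast, ZMod.natCast_self]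
      · simp [Prod.snd_natCast]
    rw [h1, AddChar.map_zero_eq_one]
  have hδq : δ ^ q = 1 := by
    rw [hδ, ← AddChar.map_nsmul_eq_pow]
    have h1 : q • ε2 = 0 := by
      rw [nsmul_eq_mul]
      apply ρ.injective
      rw [map_mul, map_natCast, map_zero, hε2, RingEquiv.apply_symm_apply]
      apply Prod.ext
      · simp [Prod.fst_natCast]
      · simp [Prod.snd_natCast, ZMod.natCast_self]
    rw [h1, AddChar.map_zero_eq_one]
  have hγδ : γ * δ = 2 := by
    have h1 : ε1 + ε2 = 1 := by
      apply ρ.injective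
      rw [map_add, hε1, hε2, RingEquiv.apply_symm_apply, RingEquiv.apply_symm_apply, map_one]
      simp [Prod.ext_iff]
    rw [hγ, hδ, ← AddChar.map_add_eq_mul, h1, hψap, ZMod.val_one, pow_one]
  set A := ∑ a ∈ Finset.univ.filter (fun a : ZMod p => a ≠ 0), γ ^ a.val with hA
  set T1 := ∑ b ∈ DHQNR q, δ ^ b.val with hT1
  -- sum over Q
  have hQsum : ∑ u ∈ DHQ p q, ψ u = A := by
    rw [DHQ, Finset.sum_image (by
      intro k hk k' hk' hkk
      rw [Finset.mem_coe, Finset.mem_Icc] at hk hk'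
      have h1 : k * q < p * q := by
        have : k < p := by omega
        exact (Nat.mul_lt_mul_right hq.pos).mpr this
      have h2 : k' * q < p * q := by
        have : k' < p := by omega
        exact (Nat.mul_lt_mul_right hq.pos).mpr this
      have := congrArg ZMod.val hkk
      rw [ZMod.val_natCast_of_lt h1, ZMod.val_natCast_of_lt h2] at this
      exact Nat.eq_of_mul_eq_mul_right hq.pos this)]
    have hstep : ∀ k ∈ Finset.Icc 1 (p-1),
        ψ ((k * q : ℕ) : ZMod (p*q)) = γ ^ (((k * q : ℕ) : ZMod p)).val := by
      intro k hk
      rw [hFnat]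
      have h1 : ((k * q : ℕ) : ZMod q) = 0 := by
        push_cast [ZMod.natCast_self]
        ring
      rw [h1, ZMod.val_zero, pow_zero, mul_one]
    rw [Finset.sum_congr rfl hstep]
    apply Finset.sum_bij (i := fun k _ => ((k * q : ℕ) : ZMod p))
    · intro k hk
      rw [Finset.mem_Icc] at hk
      rw [Finset.mem_filter]
      refine ⟨Finset.mem_univ _, ?_⟩
      rw [ne_eq, ZMod.natCast_eq_zero_iff]
      intro hdvd
      rcases (Nat.Prime.dvd_mul hp).mp hdvd with h | h
      · exact absurd (Nat.le_of_dvd (by omega) h) (by omega)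
      · rw [Nat.prime_dvd_prime_iff_eq hp hq] at h
        omega
    · intro k hk k' hk' hkk
      rw [Finset.mem_Icc] at hk hk'
      rw [Nat.cast_mul, Nat.cast_mul] at hkk
      have hqp0 : (q : ZMod p) ≠ 0 := by
        rw [ne_eq, ZMod.natCast_eq_zero_iff]
        intro h
        rw [Nat.prime_dvd_prime_iff_eq hp hq] at h
        omega
      have h1 : (k : ZMod p) = (k' : ZMod p) := mul_right_cancel₀ hqp0 hkk
      rw [ZMod.natCast_eq_natCast_iff] at h1
      have h2 : k % p = k' % p := h1
      rw [Nat.mod_eq_of_lt (by omega), Nat.mod_eq_of_lt (by omega)] at h2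
      exact h2
    · intro a ha
      rw [Finset.mem_filter] at ha
      obtain ⟨-, ha⟩ := ha
      have hqp0 : (q : ZMod p) ≠ 0 := by
        rw [ne_eq, ZMod.natCast_eq_zero_iff]
        intro h
        rw [Nat.prime_dvd_prime_iff_eq hp hq] at h
        omega
      refine ⟨(a * (q : ZMod p)⁻¹).val, ?_, ?_⟩
      · rw [Finset.mem_Icc]
        constructor
        · rw [Nat.one_le_iff_ne_zero, ne_eq, ZMod.val_eq_zero]
          exact mul_ne_zero ha (inv_ne_zero hqp0)
        · have := ZMod.val_lt (a * (q : ZMod p)⁻¹)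
          omega
      · rw [Nat.cast_mul, ZMod.natCast_zmod_val, mul_assoc, inv_mul_cancel₀ hqp0, mul_one]
    · intro k hk
      rfl
  -- sum over D1
  have hD1img : DHD1 p q g x =
      ((Finset.univ.filter (fun a : ZMod p => a ≠ 0)) ×ˢ DHQNR q).image (fun ab => ρ.symm ab) := by
    ext u
    rw [DHmemD1_iff hp hq hpo hqo hpq hgcd hgp hgq hxp hxq, Finset.mem_image]
    constructor
    · rintro ⟨ha, hb⟩
      refine ⟨(ZMod.castHom (dvd_mul_right p q) (ZMod p) u,
               ZMod.castHom (dvd_mul_left q p) (ZMod q) u), ?_, ?_⟩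
      · rw [Finset.mem_product]
        exact ⟨Finset.mem_filter.mpr ⟨Finset.mem_univ _, ha⟩, hb⟩
      · have h1 : ρ u = (ZMod.castHom (dvd_mul_right p q) (ZMod p) u,
               ZMod.castHom (dvd_mul_left q p) (ZMod q) u) :=
          Prod.ext (DHcrt_fst hco u) (DHcrt_snd hco u)
        rw [← h1, RingEquiv.symm_apply_apply]
    · rintro ⟨⟨a, b⟩, hab, rfl⟩
      rw [Finset.mem_product] at hab
      constructor
      · rw [DHsymm_fst]
        exact (Finset.mem_filter.mp hab.1).2
      · rw [DHsymm_snd]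
        exact hab.2
  have hD1sum : ∑ u ∈ DHD1 p q g x, ψ u = A * T1 := by
    rw [hD1img, Finset.sum_image (fun a _ b _ h => ρ.symm.injective h)]
    rw [hA, hT1, Finset.sum_mul_sum]
    rw [Finset.sum_product]
    exact Finset.sum_congr rfl (fun a _ => Finset.sum_congr rfl (fun b _ => hFsymm a b))
  -- disjointness
  have hdisj : Disjoint (DHD1 p q g x) (DHQ p q) := by
    rw [Finset.disjoint_left]
    intro u hu1 huQ
    rw [DHmemD1_iff hp hq hpo hqo hpq hgcd hgp hgq hxp hxq] at hu1
    have h1 : ZMod.castHom (dvd_mul_left q p) (ZMod q) u ≠ 0 :=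
      (DHmem_QNR.mp hu1.2).1
    rw [DHQ, Finset.mem_image] at huQ
    obtain ⟨k, -, rfl⟩ := huQ
    apply h1
    rw [map_natCast]
    push_cast [ZMod.natCast_self]
    ring
  -- decomposition of S
  have hSdec : ((DHS2num2 p q g x : ℕ) : ZMod r) = ∑ u ∈ DHD1 p q g x ∪ DHQ p q, ψ u := by
    rw [DHS2num2, Nat.cast_sum]
    have hstep : ∀ i ∈ Finset.range (p * q),
        ((DHs2 p q g x i * 2 ^ i : ℕ) : ZMod r)
          = if ((i : ZMod (p*q)) ∈ DHD1 p q g x ∪ DHQ p q) then ψ ((i : ZMod (p*q))) else 0 := by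
      intro i hi
      rw [Finset.mem_range] at hi
      rw [DHs2]
      push_cast
      rw [hψap, ZMod.val_natCast_of_lt hi]
      split
      · rw [one_mul]
      · rw [zero_mul]
    rw [Finset.sum_congr rfl hstep]
    have hreindex : ∑ i ∈ Finset.range (p * q),
        (if ((i : ZMod (p*q)) ∈ DHD1 p q g x ∪ DHQ p q) then ψ ((i : ZMod (p*q))) else 0)
      = ∑ u : ZMod (p * q),
        (if (u ∈ DHD1 p q g x ∪ DHQ p q) then ψ u else 0) := by
      apply Finset.sum_nbij' (i := fun i : ℕ => (i : ZMod (p*q))) (j := fun u : ZMod (p*q) => u.val)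
      · intro i _
        exact Finset.mem_univ _
      · intro u _
        exact Finset.mem_range.mpr (ZMod.val_lt u)
      · intro i hi
        exact ZMod.val_natCast_of_lt (Finset.mem_range.mp hi)
      · intro u _
        exact ZMod.natCast_zmod_val u
      · intro i _
        rfl
    rw [hreindex, Finset.sum_ite_mem, Finset.univ_inter, Finset.sum_union hdisj]
  have hmain : A * T1 + A = 0 := by
    rw [← hD1sum, ← hQsum, ← Finset.sum_union hdisj, ← hSdec, hS0]
  -- structure of A
  have hAsplit : (1 : ZMod r) + A = ∑ a : ZMod p, γ ^ a.val := by
    rw [hA, Finset.filter_ne', ← Finset.add_sum_erase Finset.univ _ (Finset.mem_univ (0 : ZMod p))]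
    norm_num [ZMod.val_zero]
  have hAneg : γ ≠ 1 → A = -1 := by
    intro hγ1
    have h0 := DHsum_pow_val hγp hγ1
    rw [← hAsplit] at h0
    linear_combination h0
  have hAcard : γ = 1 → A = ((p - 1 : ℕ) : ZMod r) := by
    intro hγ1
    rw [hA, Finset.sum_congr rfl (fun a _ => by rw [hγ1, one_pow]),
      Finset.sum_const, nsmul_eq_mul, mul_one]
    congr 1
    rw [Finset.filter_ne', Finset.card_erase_of_mem (Finset.mem_univ _),
      Finset.card_univ, ZMod.card]
  by_cases hδ1 : δ = 1
  · -- δ trivial: counting branch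
    have hγ1 : γ ≠ 1 := by
      intro h
      rw [h, hδ1, mul_one] at hγδ
      have h0 : (1 : ZMod r) = 0 := by linear_combination -hγδ
      exact one_ne_zero h0
    have hrp : 2 * p + 1 ≤ r := DHord hr2 hp hp2 hγp hγ1
    have hAv := hAneg hγ1
    have hT1v : T1 = -1 := by
      rw [hAv] at hmain
      linear_combination -hmain
    have hT1c : T1 = (((DHQNR q).card : ℕ) : ZMod r) := by
      rw [hT1, Finset.sum_congr rfl (fun b _ => by rw [hδ1, one_pow]),
        Finset.sum_const, nsmul_eq_mul, mul_one]
    have hcardle : (DHQNR q).card ≤ q - 1 := by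
      have hsub : DHQNR q ⊆ Finset.univ.erase 0 := by
        intro a ha
        exact Finset.mem_erase.mpr ⟨(DHmem_QNR.mp ha).1, Finset.mem_univ _⟩
      have := Finset.card_le_card hsub
      rwa [Finset.card_erase_of_mem (Finset.mem_univ _), Finset.card_univ, ZMod.card] at this
    have hzero : (((DHQNR q).card + 1 : ℕ) : ZMod r) = 0 := by
      push_cast
      rw [← hT1c, hT1v]
      ring
    exact DHnotdvd (by omega) (by omega) hzero
  · -- Gauss branch
    have hrq : 2 * q + 1 ≤ r := DHord hr2 hq hq2 hδq hδ1
    have hAne : A ≠ 0 := by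
      by_cases hγ1 : γ = 1
      · rw [hAcard hγ1]
        intro h0
        exact DHnotdvd (by omega) (by omega) h0
      · rw [hAneg hγ1]
        exact neg_ne_zero.mpr one_ne_zero
    have hT1v : T1 = -1 := by
      have h1 : A * (T1 + 1) = 0 := by linear_combination hmain
      rcases mul_eq_zero.mp h1 with h | h
      · exact absurd h hAne
      · linear_combination h
    set T0 := ∑ b ∈ DHQR q, δ ^ b.val with hT0
    have hQRfil : ((Finset.univ.filter (fun a : ZMod q => a ≠ 0)).filter
        (fun a => ∃ b : ZMod q, b * b = a)) = DHQR q := by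
      ext a
      simp [DHQR, Finset.mem_filter, and_assoc]
    have hQNRfil : ((Finset.univ.filter (fun a : ZMod q => a ≠ 0)).filter
        (fun a => ¬∃ b : ZMod q, b * b = a)) = DHQNR q := by
      ext a
      simp [DHQNR, Finset.mem_filter, and_assoc]
    have hsplitq : (1 : ZMod r) + (T0 + T1) = ∑ b : ZMod q, δ ^ b.val := by
      rw [← Finset.add_sum_erase Finset.univ _ (Finset.mem_univ (0 : ZMod q)),
        ← Finset.filter_ne',
        ← Finset.sum_filter_add_sum_filter_not
          (Finset.univ.filter (fun a : ZMod q => a ≠ 0))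
          (fun a => ∃ b : ZMod q, b * b = a), hQRfil, hQNRfil]
      norm_num [ZMod.val_zero]
      rfl
    have hT0v : T0 = 0 := by
      have h0 := DHsum_pow_val hδq hδ1
      rw [← hsplitq, hT1v] at h0
      linear_combination h0
    -- Gauss sum
    haveI : Fact (1 < q) := ⟨by omega⟩
    set χ : MulChar (ZMod q) (ZMod r) :=
      (quadraticChar (ZMod q)).ringHomComp (Int.castRingHom (ZMod r)) with hχdef
    have hrchar : ringChar (ZMod q) ≠ 2 := by
      rw [ZMod.ringChar_zmod_n]; exact hq2
    have hne11 : ((-1 : ℤ) : ZMod r) ≠ 1 := by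
      intro h
      have h2 : ((2 : ℕ) : ZMod r) = 0 := by push_cast at h ⊢; linear_combination -h
      exact DHnotdvd (by omega) (by omega) h2
    have hχne : χ ≠ 1 := by
      obtain ⟨a, hansq⟩ := FiniteField.exists_nonsquare hrchar
      have ha0 : a ≠ 0 := fun h => hansq ⟨0, by rw [h, mul_zero]⟩
      rw [MulChar.ne_one_iff]
      refine ⟨Units.mk0 a ha0, ?_⟩
      rw [hχdef, MulChar.ringHomComp_apply]
      have hqc : quadraticChar (ZMod q) (Units.mk0 a ha0 : (ZMod q)ˣ) = -1 :=
        quadraticChar_neg_one_iff_not_isSquare.mpr hansq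
      rw [hqc]
      exact_mod_cast hne11
    have hχquad : χ.IsQuadratic := (quadraticChar_isQuadratic (ZMod q)).comp _
    set ψq := AddChar.zmodChar q hδq with hψqdef
    have hψqap : ∀ b : ZMod q, ψq b = δ ^ b.val := fun b => rfl
    have hψqne : ψq ≠ 1 := by
      rw [AddChar.zmod_char_ne_one_iff]
      rw [hψqap, ZMod.val_one, pow_one]
      exact hδ1
    have hψqprim : ψq.IsPrimitive := AddChar.IsPrimitive.of_ne_one hψqne
    have hgsum : gaussSum χ ψq = T0 - T1 := by
      rw [gaussSum, ← Finset.add_sum_erase Finset.univ _ (Finset.mem_univ (0 : ZMod q)),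
        ← Finset.filter_ne',
        ← Finset.sum_filter_add_sum_filter_not
          (Finset.univ.filter (fun a : ZMod q => a ≠ 0))
          (fun a => ∃ b : ZMod q, b * b = a), hQRfil, hQNRfil]
      have hz : χ (0 : ZMod q) * ψq 0 = 0 := by
        rw [hχdef, MulChar.ringHomComp_apply, quadraticChar_zero, map_zero, zero_mul]
      rw [hz, zero_add]
      have hqr : ∑ b ∈ DHQR q, χ b * ψq b = T0 := by
        apply Finset.sum_congr rfl
        intro b hb
        obtain ⟨hb0, c, hc⟩ := DHmem_QR.mp hb
        have hsq : quadraticChar (ZMod q) b = 1 :=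
          (quadraticChar_one_iff_isSquare hb0).mpr ⟨c, hc.symm⟩
        rw [hχdef, MulChar.ringHomComp_apply, hsq, map_one, one_mul, hψqap]
      have hqnr : ∑ b ∈ DHQNR q, χ b * ψq b = -T1 := by
        rw [hT1, ← Finset.sum_neg_distrib]
        apply Finset.sum_congr rfl
        intro b hb
        obtain ⟨hb0, hbns⟩ := DHmem_QNR.mp hb
        have hsq : quadraticChar (ZMod q) b = -1 :=
          quadraticChar_neg_one_iff_not_isSquare.mpr
            (fun ⟨c, hc⟩ => hbns ⟨c, hc.symm⟩)
        rw [hχdef, MulChar.ringHomComp_apply, hsq, map_neg, map_one, hψqap, neg_one_mul]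
      rw [hqr, hqnr]
      ring
    have hsq := gaussSum_sq hχne hχquad hψqprim
    rw [hgsum, hT0v, hT1v, ZMod.card] at hsq
    have hlhs : ((0 : ZMod r) - (-1)) ^ 2 = 1 := by ring
    rw [hlhs] at hsq
    rcases hχquad (-1) with h | h | h
    · rw [h, zero_mul] at hsq
      exact one_ne_zero hsq
    · rw [h, one_mul] at hsq
      have hz : ((q - 1 : ℕ) : ZMod r) = 0 := by
        push_cast [Nat.cast_sub (by omega : 1 ≤ q)]
        linear_combination -hsq
      exact DHnotdvd (by omega) (by omega) hz
    · rw [h, neg_one_mul] at hsq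
      have hz : ((q + 1 : ℕ) : ZMod r) = 0 := by
        push_cast
        linear_combination hsq
      exact DHnotdvd (by omega) (by omega) hz

end Master

theorem stmt19 (p q g x : ℕ) (hp : Nat.Prime p) (hq : Nat.Prime q)
    (hpo : Odd p) (hqo : Odd q) (hpq : p < q)
    (hgcd : Nat.gcd (p - 1) (q - 1) = 2)
    (hgp : orderOf (g : ZMod p) = p - 1) (hgq : orderOf (g : ZMod q) = q - 1)
    (hxp : (x : ZMod p) = (g : ZMod p)) (hxq : (x : ZMod q) = 1) (htwin : q = p + 2) :
    Nat.gcd (DHS2num2 p q g x) (2 ^ (p * q) - 1) = 1 := by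
  by_contra hne
  have hr := Nat.minFac_prime hne
  set r := (Nat.gcd (DHS2num2 p q g x) (2 ^ (p * q) - 1)).minFac with hrdef
  have hrS : r ∣ DHS2num2 p q g x := (Nat.minFac_dvd _).trans (Nat.gcd_dvd_left _ _)
  have hrM : r ∣ 2 ^ (p * q) - 1 := (Nat.minFac_dvd _).trans (Nat.gcd_dvd_right _ _)
  have h2N : 1 ≤ 2 ^ (p * q) := Nat.one_le_two_pow
  have hodd : Odd (2 ^ (p * q) - 1) := by
    have hpq0 : p * q ≠ 0 := Nat.mul_ne_zero hp.pos.ne' hq.pos.ne'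
    have heven : Even (2 ^ (p * q)) := (Nat.even_pow).mpr ⟨even_two, hpq0⟩
    exact Nat.Even.sub_odd h2N heven odd_one
  have hr2 : r ≠ 2 := by
    rintro h2
    rw [Nat.odd_iff] at hodd
    obtain ⟨c, hc⟩ := hrM
    rw [h2] at hc
    omega
  haveI : NeZero r := ⟨hr.pos.ne'⟩
  have hβ1 : (2 : ZMod r) ^ (p * q) = 1 := by
    have hz : ((2 ^ (p * q) - 1 : ℕ) : ZMod r) = 0 :=
      (ZMod.natCast_eq_zero_iff _ _).mpr hrM
    push_cast [Nat.cast_sub h2N] at hz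
    linear_combination hz
  have hS0 : ((DHS2num2 p q g x : ℕ) : ZMod r) = 0 :=
    (ZMod.natCast_eq_zero_iff _ _).mpr hrS
  exact DHkey hp hq hpo hqo hpq hgcd hgp hgq hxp hxq htwin r hr hr2 hβ1 hS0
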